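/- Fix T > 0, s ≥ 0, R > 0 with s² + R² = T², and let w₀ : [0,∞) → [0,∞) be continuous. For each n choose zⁿ ∈ ℝⁿ with |zⁿ| = s. Then the averages of w₀(|x|) over the balls B(zⁿ,R) ⊂ ℝⁿ converge to w₀(T) as n → ∞: lim_{n→∞} (1/|B(zⁿ,R)|) ∫_{B(zⁿ,R)} w₀(|x|) dx = w₀(T). -/

import Mathlib

open MeasureTheory Metric Filter Topology
open scoped ENNReal


lemma aux_sq_norm {E : Type*} [NormedAddCommGroup E] [InnerProductSpace ℝ E]
    (x z : E) (c : ℝ) :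
    ‖x - c • z‖ ^ 2 = ‖x‖ ^ 2 - c * (‖x‖ ^ 2 + ‖z‖ ^ 2 - ‖x - z‖ ^ 2) + c ^ 2 * ‖z‖ ^ 2 := by
  have h1 := norm_sub_sq_real x (c • z)
  have h2 := norm_sub_sq_real x z
  have h3 : (inner ℝ x (c • z) : ℝ) = c * (inner ℝ x z : ℝ) := real_inner_smul_right x z c
  have h4 : ‖c • z‖ ^ 2 = c ^ 2 * ‖z‖ ^ 2 := by
    rw [norm_smul, mul_pow, Real.norm_eq_abs, sq_abs]
  rw [h3, h4] at h1
  linear_combination h1 - c * h2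

lemma aux_incl {E : Type*} [NormedAddCommGroup E] [InnerProductSpace ℝ E]
    {T s R ε m : ℝ} (hT : 0 < T) (hs : 0 ≤ s) (hR : 0 < R)
    (hTsR : s ^ 2 + R ^ 2 = T ^ 2) (hε0 : 0 < ε) (hεT : ε < T)
    (hm0 : 0 < m) (hm1 : m ≤ 1) (hms : m * s ^ 2 ≤ (T ^ 2 - (T - ε) ^ 2) / 2)
    {z x : E} (hzn : ‖z‖ = s) (hx : x ∈ ball z R)
    (hbad : ‖x‖ ≤ T - ε ∨ T + ε ≤ ‖x‖) :
    x ∈ closedBall ((1 - m) • z) (Real.sqrt (R ^ 2 - m * (T ^ 2 - (T - ε) ^ 2) / 2)) ∪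
      closedBall ((1 + m) • z) (Real.sqrt (R ^ 2 - m * (T ^ 2 - (T - ε) ^ 2) / 2)) := by
  have hxz : ‖x - z‖ < R := by rwa [mem_ball, dist_eq_norm] at hx
  have hxz0 : (0:ℝ) ≤ ‖x - z‖ := norm_nonneg _
  have hx0 : (0:ℝ) ≤ ‖x‖ := norm_nonneg _
  have hY : ‖x - z‖ ^ 2 ≤ R ^ 2 := by nlinarith
  have hmm : m * (m * s ^ 2) ≤ m * ((T ^ 2 - (T - ε) ^ 2) / 2) :=
    mul_le_mul_of_nonneg_left hms hm0.le
  have hTm : m * (s ^ 2 + R ^ 2) = m * T ^ 2 := by rw [hTsR]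
  rcases hbad with h | h
  · left
    have hid := aux_sq_norm x z (1 - m)
    rw [hzn] at hid
    have hX : m * ‖x‖ ^ 2 ≤ m * (T - ε) ^ 2 :=
      mul_le_mul_of_nonneg_left (pow_le_pow_left₀ hx0 h 2) hm0.le
    have hY' : (1 - m) * ‖x - z‖ ^ 2 ≤ (1 - m) * R ^ 2 :=
      mul_le_mul_of_nonneg_left hY (by linarith)
    have hkey : ‖x - (1 - m) • z‖ ^ 2 ≤ R ^ 2 - m * (T ^ 2 - (T - ε) ^ 2) / 2 := by
      nlinarith [hid, hX, hY', hmm, hTm, mul_nonneg hm0.le (sq_nonneg ε)]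
    have hK0 : (0:ℝ) ≤ R ^ 2 - m * (T ^ 2 - (T - ε) ^ 2) / 2 :=
      le_trans (sq_nonneg _) hkey
    rw [mem_closedBall, dist_eq_norm]
    exact (Real.le_sqrt (norm_nonneg _) hK0).mpr hkey
  · right
    have hid := aux_sq_norm x z (1 + m)
    rw [hzn] at hid
    have hX : m * (T + ε) ^ 2 ≤ m * ‖x‖ ^ 2 :=
      mul_le_mul_of_nonneg_left (pow_le_pow_left₀ (by linarith) h 2) hm0.le
    have hY' : (1 + m) * ‖x - z‖ ^ 2 ≤ (1 + m) * R ^ 2 :=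
      mul_le_mul_of_nonneg_left hY (by linarith)
    have hkey : ‖x - (1 + m) • z‖ ^ 2 ≤ R ^ 2 - m * (T ^ 2 - (T - ε) ^ 2) / 2 := by
      nlinarith [hid, hX, hY', hmm, hTm, mul_nonneg hm0.le (sq_nonneg ε)]
    have hK0 : (0:ℝ) ≤ R ^ 2 - m * (T ^ 2 - (T - ε) ^ 2) / 2 :=
      le_trans (sq_nonneg _) hkey
    rw [mem_closedBall, dist_eq_norm]
    exact (Real.le_sqrt (norm_nonneg _) hK0).mpr hkey


theorem stmt_14 (T s R : ℝ) (hT : 0 < T) (hs : 0 ≤ s) (hR : 0 < R)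
    (hTsR : s ^ 2 + R ^ 2 = T ^ 2)
    (w₀ : ℝ → ℝ) (hwc : Continuous w₀) (hw : ∀ r : ℝ, 0 ≤ w₀ r)
    (z : ∀ n : ℕ, EuclideanSpace ℝ (Fin (n + 1))) (hz : ∀ n, ‖z n‖ = s) :
    Tendsto
      (fun n : ℕ =>
        (volume (ball (z n) R))⁻¹ * ∫⁻ x in ball (z n) R, ENNReal.ofReal (w₀ ‖x‖))
      atTop (nhds (ENNReal.ofReal (w₀ T))) := by
  rw [ENNReal.tendsto_nhds ENNReal.ofReal_ne_top]
  intro ε' hε'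
  obtain ⟨p, hp0, hpε⟩ := ENNReal.lt_iff_exists_nnreal_btwn.mp hε'
  have hp0' : (0:ℝ) < p := ENNReal.coe_pos.mp hp0
  set η : ℝ := (p : ℝ) / 2 with hη_def
  have hη0 : 0 < η := by positivity
  -- bound M on [0, s+R]
  obtain ⟨M, hM⟩ :=
    (isCompact_Icc (a := (0:ℝ)) (b := s + R)).exists_bound_of_continuousOn hwc.continuousOn
  have hMb : ∀ t : ℝ, 0 ≤ t → t ≤ s + R → w₀ t ≤ M := by
    intro t h1 h2
    have := hM t ⟨h1, h2⟩
    rw [Real.norm_eq_abs] at this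
    exact (le_abs_self _).trans this
  have hM0 : 0 ≤ M := by
    have := hM 0 ⟨le_rfl, by positivity⟩
    exact (norm_nonneg _).trans this
  have hTle : T ≤ s + R := by nlinarith
  have hwTM : w₀ T ≤ M := hMb T hT.le hTle
  -- continuity modulus
  obtain ⟨δ, hδ0, hδ⟩ := Metric.continuousAt_iff.mp hwc.continuousAt η hη0
  set ε : ℝ := min (δ / 2) (T / 2) with hε_def
  have hε0 : 0 < ε := lt_min (by linarith) (by linarith)
  have hεT : ε < T := (min_le_right _ _).trans_lt (by linarith)
  have hεδ : ε < δ := (min_le_left _ _).trans_lt (by linarith)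
  have hεw : ∀ t : ℝ, |t - T| ≤ ε → |w₀ t - w₀ T| ≤ η := by
    intro t ht
    have h1 : dist t T < δ := by rw [Real.dist_eq]; linarith [abs_nonneg (t - T)]
    have := hδ h1
    rw [Real.dist_eq] at this
    exact this.le
  -- geometric constants
  set a : ℝ := T ^ 2 - (T - ε) ^ 2 with ha_def
  have ha : 0 < a := by nlinarith
  set m : ℝ := min 1 (a / (2 * (s ^ 2 + 1))) with hm_def
  have hm0 : 0 < m := lt_min one_pos (by positivity)
  have hm1 : m ≤ 1 := min_le_left _ _
  have hms : m * s ^ 2 ≤ a / 2 := by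
    have h2 : m * (2 * (s ^ 2 + 1)) ≤ a := by
      rw [← le_div_iff₀ (by positivity)]
      exact min_le_right _ _
    nlinarith [hm0.le]
  set r : ℝ := Real.sqrt (R ^ 2 - m * a / 2) with hr_def
  have hr0 : 0 ≤ r := Real.sqrt_nonneg _
  have hrR : r < R := by
    rw [hr_def]
    exact (Real.sqrt_lt' hR).mpr (by nlinarith)
  have hrR1 : r / R < 1 := (div_lt_one hR).mpr hrR
  -- q n → 0
  have hq : Tendsto (fun n : ℕ => M * (2 * (r / R) ^ (n + 1))) atTop (𝓝 0) := by
    have h1 : Tendsto (fun n : ℕ => (r / R) ^ n) atTop (𝓝 0) :=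
      tendsto_pow_atTop_nhds_zero_of_lt_one (by positivity) hrR1
    have h2 := (h1.comp (tendsto_add_atTop_nat 1)).const_mul (M * 2)
    simpa [Function.comp, mul_assoc] using h2
  have hev : ∀ᶠ n : ℕ in atTop, M * (2 * (r / R) ^ (n + 1)) ≤ η :=
    (hq.eventually_lt_const hη0).mono fun n hn => hn.le
  filter_upwards [hev] with n hn
  -- per-n setup
  set q : ℝ := 2 * (r / R) ^ (n + 1) with hq_def
  have hq0 : 0 ≤ q := by positivity
  set B : Set (EuclideanSpace ℝ (Fin (n + 1))) := ball (z n) R with hB_def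
  set D : Set (EuclideanSpace ℝ (Fin (n + 1))) :=
    {x | x ∈ ball (z n) R ∧ (‖x‖ ≤ T - ε ∨ T + ε ≤ ‖x‖)} with hD_def
  have hDB : D ⊆ B := fun x hx => hx.1
  have hDm : MeasurableSet D := by
    have : D = ball (z n) R ∩ ((fun x => ‖x‖) ⁻¹' (Set.Iic (T - ε) ∪ Set.Ici (T + ε))) := by
      ext x
      simp [hD_def, Set.mem_preimage, and_comm]
    rw [this]
    exact measurableSet_ball.inter (measurable_norm (measurableSet_Iic.union measurableSet_Ici))
  have hDsub : D ⊆ closedBall ((1 - m) • z n) r ∪ closedBall ((1 + m) • z n) r := by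
    intro x hx
    exact aux_incl hT hs hR hTsR hε0 hεT hm0 hm1 (by linarith [hms] : m * s ^ 2 ≤ (T ^ 2 - (T - ε) ^ 2) / 2) (hz n) hx.1 hx.2
  -- volumes
  have hB0 : volume B ≠ 0 := (measure_ball_pos _ _ hR).ne'
  have hBt : volume B ≠ ⊤ := measure_ball_lt_top.ne
  have hDvol : volume D ≤ ENNReal.ofReal q * volume B := by
    have hfr : Module.finrank ℝ (EuclideanSpace ℝ (Fin (n + 1))) = n + 1 :=
      finrank_euclideanSpace_fin
    have hcb : ∀ c : EuclideanSpace ℝ (Fin (n + 1)), volume (closedBall c r) =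
        ENNReal.ofReal (r ^ (n + 1)) * volume (ball (0 : EuclideanSpace ℝ (Fin (n + 1))) 1) := by
      intro c
      rw [Measure.addHaar_closedBall volume c hr0, hfr]
    have hBvol : volume B =
        ENNReal.ofReal (R ^ (n + 1)) * volume (ball (0 : EuclideanSpace ℝ (Fin (n + 1))) 1) := by
      rw [hB_def, Measure.addHaar_ball_of_pos volume (z n) hR, hfr]
    calc volume D ≤ volume (closedBall ((1 - m) • z n) r ∪ closedBall ((1 + m) • z n) r) :=
          measure_mono hDsub
      _ ≤ volume (closedBall ((1 - m) • z n) r) + volume (closedBall ((1 + m) • z n) r) :=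
          measure_union_le _ _
      _ = ENNReal.ofReal (2 * r ^ (n + 1)) *
            volume (ball (0 : EuclideanSpace ℝ (Fin (n + 1))) 1) := by
          rw [hcb, hcb, ← two_mul, ← mul_assoc,
            ENNReal.ofReal_mul (by norm_num : (0:ℝ) ≤ 2), ENNReal.ofReal_ofNat]
      _ = ENNReal.ofReal q * volume B := by
          rw [hBvol, ← mul_assoc, ← ENNReal.ofReal_mul hq0]
          congr 2
          rw [hq_def]
          field_simp
          rw [div_pow, div_mul_cancel₀ _ (pow_ne_zero _ hR.ne')]
  have hDt : volume D ≠ ⊤ := ((measure_mono hDB).trans_lt measure_ball_lt_top).ne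
  -- pointwise bounds
  have hnormB : ∀ x ∈ B, 0 ≤ ‖x‖ ∧ ‖x‖ ≤ s + R := by
    intro x hx
    refine ⟨norm_nonneg _, ?_⟩
    have h1 : ‖x - z n‖ < R := by rwa [hB_def, mem_ball, dist_eq_norm] at hx
    have h2 : ‖x‖ - ‖z n‖ ≤ ‖x - z n‖ := norm_sub_norm_le x (z n)
    rw [hz n] at h2
    linarith
  have hgoodw : ∀ x ∈ B, x ∉ D → |w₀ ‖x‖ - w₀ T| ≤ η := by
    intro x hxB hxD
    apply hεw
    rw [hD_def, Set.mem_setOf_eq, not_and, not_or] at hxD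
    obtain ⟨h1, h2⟩ := hxD hxB
    rw [abs_le]
    constructor <;> [linarith [not_le.mp h1]; linarith [not_le.mp h2]]
  -- upper bound
  have hup : (volume B)⁻¹ * (∫⁻ x in B, ENNReal.ofReal (w₀ ‖x‖)) ≤
      ENNReal.ofReal (w₀ T + η) + ENNReal.ofReal (M * q) := by
    have hptw : ∀ x ∈ B, ENNReal.ofReal (w₀ ‖x‖) ≤
        ENNReal.ofReal (w₀ T + η) + D.indicator (fun _ => ENNReal.ofReal M) x := by
      intro x hx
      by_cases hxD : x ∈ D
      · have h1 : w₀ ‖x‖ ≤ M := hMb _ (hnormB x hx).1 (hnormB x hx).2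
        calc ENNReal.ofReal (w₀ ‖x‖) ≤ ENNReal.ofReal M := ENNReal.ofReal_le_ofReal h1
          _ = D.indicator (fun _ => ENNReal.ofReal M) x := by rw [Set.indicator_of_mem hxD]
          _ ≤ _ := le_add_self
      · have h1 := hgoodw x hx hxD
        have h2 : w₀ ‖x‖ ≤ w₀ T + η := by have := (abs_le.mp h1).2; linarith
        calc ENNReal.ofReal (w₀ ‖x‖) ≤ ENNReal.ofReal (w₀ T + η) := ENNReal.ofReal_le_ofReal h2
          _ ≤ _ := le_self_add
    have hint : (∫⁻ x in B, ENNReal.ofReal (w₀ ‖x‖)) ≤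
        ENNReal.ofReal (w₀ T + η) * volume B + ENNReal.ofReal M * volume D := by
      have hmeas2 : Measurable fun x : EuclideanSpace ℝ (Fin (n + 1)) =>
          ENNReal.ofReal (w₀ T + η) + D.indicator (fun _ => ENNReal.ofReal M) x :=
        Measurable.const_add (measurable_const.indicator hDm) _
      calc (∫⁻ x in B, ENNReal.ofReal (w₀ ‖x‖))
          ≤ ∫⁻ x in B, (ENNReal.ofReal (w₀ T + η) + D.indicator (fun _ => ENNReal.ofReal M) x) :=
            setLIntegral_mono hmeas2 hptw
        _ = ENNReal.ofReal (w₀ T + η) * volume B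
            + ∫⁻ x in B, D.indicator (fun _ => ENNReal.ofReal M) x := by
            rw [lintegral_add_left measurable_const, setLIntegral_const]
        _ = ENNReal.ofReal (w₀ T + η) * volume B + ENNReal.ofReal M * volume D := by
            rw [lintegral_indicator hDm, setLIntegral_const, Measure.restrict_apply hDm,
              Set.inter_eq_self_of_subset_left hDB]
    calc (volume B)⁻¹ * (∫⁻ x in B, ENNReal.ofReal (w₀ ‖x‖))
        ≤ (volume B)⁻¹ *
          (ENNReal.ofReal (w₀ T + η) * volume B + ENNReal.ofReal M * volume D) :=
          mul_le_mul_right hint _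
      _ ≤ (volume B)⁻¹ * (ENNReal.ofReal (w₀ T + η) * volume B
            + ENNReal.ofReal M * (ENNReal.ofReal q * volume B)) :=
          mul_le_mul_right (add_le_add_right (mul_le_mul_right hDvol _) _) _
      _ = (ENNReal.ofReal (w₀ T + η) + ENNReal.ofReal M * ENNReal.ofReal q) *
            ((volume B)⁻¹ * volume B) := by ring
      _ = ENNReal.ofReal (w₀ T + η) + ENNReal.ofReal M * ENNReal.ofReal q := by
          rw [ENNReal.inv_mul_cancel hB0 hBt, mul_one]
      _ = ENNReal.ofReal (w₀ T + η) + ENNReal.ofReal (M * q) := by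
          rw [ENNReal.ofReal_mul hM0]
  -- lower bound
  have hlow : ENNReal.ofReal (w₀ T) - (ENNReal.ofReal η + ENNReal.ofReal η) ≤
      (volume B)⁻¹ * (∫⁻ x in B, ENNReal.ofReal (w₀ ‖x‖)) := by
    have hfmeas : Measurable fun x : EuclideanSpace ℝ (Fin (n + 1)) =>
        ENNReal.ofReal (w₀ ‖x‖) :=
      ENNReal.measurable_ofReal.comp (hwc.measurable.comp measurable_norm)
    have hG : volume (B \ D) = volume B - volume D :=
      measure_diff hDB hDm.nullMeasurableSet hDt
    have hptw2 : ∀ x ∈ B \ D, ENNReal.ofReal (w₀ T - η) ≤ ENNReal.ofReal (w₀ ‖x‖) := by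
      intro x hx
      have h1 := hgoodw x hx.1 hx.2
      exact ENNReal.ofReal_le_ofReal (by have := (abs_le.mp h1).1; linarith)
    have hint2 : ENNReal.ofReal (w₀ T - η) * (volume B - volume D) ≤
        ∫⁻ x in B, ENNReal.ofReal (w₀ ‖x‖) := by
      calc ENNReal.ofReal (w₀ T - η) * (volume B - volume D)
          = ∫⁻ _ in B \ D, ENNReal.ofReal (w₀ T - η) := by rw [setLIntegral_const, hG]
        _ ≤ ∫⁻ x in B \ D, ENNReal.ofReal (w₀ ‖x‖) := setLIntegral_mono hfmeas hptw2
        _ ≤ ∫⁻ x in B, ENNReal.ofReal (w₀ ‖x‖) := lintegral_mono_set Set.diff_subset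
    have hDq : volume D * (volume B)⁻¹ ≤ ENNReal.ofReal q := by
      calc volume D * (volume B)⁻¹ ≤ (ENNReal.ofReal q * volume B) * (volume B)⁻¹ :=
            mul_le_mul_left hDvol _
        _ = ENNReal.ofReal q * (volume B * (volume B)⁻¹) := by ring
        _ = ENNReal.ofReal q := by rw [ENNReal.mul_inv_cancel hB0 hBt, mul_one]
    have hMq : ENNReal.ofReal (M * q) ≤ ENNReal.ofReal η :=
      ENNReal.ofReal_le_ofReal (by rw [hq_def]; exact hn)
    calc ENNReal.ofReal (w₀ T) - (ENNReal.ofReal η + ENNReal.ofReal η)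
        = (ENNReal.ofReal (w₀ T) - ENNReal.ofReal η) - ENNReal.ofReal η := (tsub_tsub _ _ _).symm
      _ = ENNReal.ofReal (w₀ T - η) - ENNReal.ofReal η := by
          rw [ENNReal.ofReal_sub _ hη0.le]
      _ ≤ ENNReal.ofReal (w₀ T - η) - ENNReal.ofReal (M * q) := tsub_le_tsub_left hMq _
      _ ≤ ENNReal.ofReal (w₀ T - η) - ENNReal.ofReal (w₀ T - η) * ENNReal.ofReal q := by
          apply tsub_le_tsub_left
          calc ENNReal.ofReal (w₀ T - η) * ENNReal.ofReal q
              ≤ ENNReal.ofReal M * ENNReal.ofReal q :=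
              mul_le_mul_left (ENNReal.ofReal_le_ofReal (by linarith)) _
            _ = ENNReal.ofReal (M * q) := by rw [ENNReal.ofReal_mul hM0]
      _ = ENNReal.ofReal (w₀ T - η) * (1 - ENNReal.ofReal q) := by
          rw [ENNReal.mul_sub (fun _ _ => ENNReal.ofReal_ne_top), mul_one]
      _ ≤ ENNReal.ofReal (w₀ T - η) * (1 - volume D * (volume B)⁻¹) :=
          mul_le_mul_right (tsub_le_tsub_left hDq _) _
      _ = ENNReal.ofReal (w₀ T - η) *
            (volume B * (volume B)⁻¹ - volume D * (volume B)⁻¹) := by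
          rw [ENNReal.mul_inv_cancel hB0 hBt]
      _ = ENNReal.ofReal (w₀ T - η) * ((volume B - volume D) * (volume B)⁻¹) := by
          rw [ENNReal.sub_mul (fun _ _ => ENNReal.inv_ne_top.mpr hB0)]
      _ = (volume B)⁻¹ * (ENNReal.ofReal (w₀ T - η) * (volume B - volume D)) := by ring
      _ ≤ (volume B)⁻¹ * ∫⁻ x in B, ENNReal.ofReal (w₀ ‖x‖) := mul_le_mul_right hint2 _
  constructor
  · refine le_trans ?_ hlow
    have h1 : ENNReal.ofReal η + ENNReal.ofReal η = (p : ℝ≥0∞) := by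
      rw [← ENNReal.ofReal_add hη0.le hη0.le]
      have hpp : η + η = (p:ℝ) := by rw [hη_def]; ring
      rw [hpp, ENNReal.ofReal_coe_nnreal]
    rw [h1]
    exact tsub_le_tsub_left hpε.le _
  · refine le_trans hup ?_
    have h2 : ENNReal.ofReal (w₀ T + η) + ENNReal.ofReal (M * q) ≤
        ENNReal.ofReal (w₀ T) + ((p : ℝ≥0∞)) := by
      rw [ENNReal.ofReal_add (hw T) hη0.le]
      have h3 : ENNReal.ofReal (M * q) ≤ ENNReal.ofReal η := ENNReal.ofReal_le_ofReal (by
        rw [hq_def]; exact hn)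
      calc ENNReal.ofReal (w₀ T) + ENNReal.ofReal η + ENNReal.ofReal (M * q)
          ≤ ENNReal.ofReal (w₀ T) + ENNReal.ofReal η + ENNReal.ofReal η := by gcongr
        _ = ENNReal.ofReal (w₀ T) + (p : ℝ≥0∞) := by
            rw [add_assoc, ← ENNReal.ofReal_add hη0.le hη0.le]
            have hpp : η + η = (p:ℝ) := by rw [hη_def]; ring
            rw [hpp, ENNReal.ofReal_coe_nnreal]
    exact h2.trans (add_le_add_right hpε.le _)
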